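/- Let θ > 0 and let g(x) = θ²(1+x)·exp(−θx)/(1+θ) be the Lindley(θ) density. Then ∫₀¹ g(v)·g(1−v) dv = (13/6)·exp(−θ)·θ⁴/(1+θ)², and for every u with 0 < u < 1, g(u)·g(1−u) / ∫₀¹ g(v)·g(1−v) dv = (6/13)·(2−u)·(1+u), which does not depend on θ. -/

import Mathlib

open MeasureTheory Real

theorem lindley_lindley_conditional (θ : ℝ) (hθ : 0 < θ) :
    (∫ v in (0:ℝ)..1,
        (θ ^ 2 * (1 + v) * Real.exp (-θ * v) / (1 + θ)) *
        (θ ^ 2 * (1 + (1 - v)) * Real.exp (-θ * (1 - v)) / (1 + θ)))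
      = (13 / 6) * Real.exp (-θ) * θ ^ 4 / (1 + θ) ^ 2 ∧
    ∀ u : ℝ, 0 < u → u < 1 →
      ((θ ^ 2 * (1 + u) * Real.exp (-θ * u) / (1 + θ)) *
        (θ ^ 2 * (1 + (1 - u)) * Real.exp (-θ * (1 - u)) / (1 + θ))) /
      (∫ v in (0:ℝ)..1,
        (θ ^ 2 * (1 + v) * Real.exp (-θ * v) / (1 + θ)) *
        (θ ^ 2 * (1 + (1 - v)) * Real.exp (-θ * (1 - v)) / (1 + θ)))
      = (6 / 13) * (2 - u) * (1 + u) := by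
  have h1θ : (0:ℝ) < 1 + θ := by linarith
  have hexp : ∀ v : ℝ, Real.exp (-θ * v) * Real.exp (-θ * (1 - v)) = Real.exp (-θ) := by
    intro v
    rw [← Real.exp_add]
    ring_nf
  have hfun : ∀ v : ℝ,
      (θ ^ 2 * (1 + v) * Real.exp (-θ * v) / (1 + θ)) *
        (θ ^ 2 * (1 + (1 - v)) * Real.exp (-θ * (1 - v)) / (1 + θ))
      = (Real.exp (-θ) * θ ^ 4 / (1 + θ) ^ 2) * (2 + v - v ^ 2) := by
    intro v
    have h : Real.exp (-(θ * v)) * Real.exp (-(θ * (1 - v))) = Real.exp (-θ) := by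
      rw [← Real.exp_add]; ring_nf
    have h2 : (1 + θ) ≠ 0 := ne_of_gt h1θ
    field_simp
    linear_combination ((1 + v) * (2 - v)) * h
  have hint : (∫ v in (0:ℝ)..1,
        (θ ^ 2 * (1 + v) * Real.exp (-θ * v) / (1 + θ)) *
        (θ ^ 2 * (1 + (1 - v)) * Real.exp (-θ * (1 - v)) / (1 + θ)))
      = (13 / 6) * Real.exp (-θ) * θ ^ 4 / (1 + θ) ^ 2 := by
    have : (∫ v in (0:ℝ)..1,
        (θ ^ 2 * (1 + v) * Real.exp (-θ * v) / (1 + θ)) *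
        (θ ^ 2 * (1 + (1 - v)) * Real.exp (-θ * (1 - v)) / (1 + θ)))
        = ∫ v in (0:ℝ)..1, (Real.exp (-θ) * θ ^ 4 / (1 + θ) ^ 2) * (2 + v - v ^ 2) := by
      apply intervalIntegral.integral_congr
      intro v _
      exact hfun v
    rw [this, intervalIntegral.integral_const_mul]
    have : (∫ v in (0:ℝ)..1, (2 + v - v ^ 2)) = 13 / 6 := by
      have h1 : IntervalIntegrable (fun v : ℝ => (2:ℝ) + v) volume 0 1 :=
        (intervalIntegrable_const).add intervalIntegral.intervalIntegrable_id
      have h2 : IntervalIntegrable (fun v : ℝ => v ^ 2) volume 0 1 :=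
        intervalIntegral.intervalIntegrable_pow 2
      rw [show (fun v : ℝ => 2 + v - v ^ 2) = (fun v : ℝ => ((2:ℝ) + v) - v ^ 2) from rfl,
        intervalIntegral.integral_sub h1 h2,
        intervalIntegral.integral_add intervalIntegrable_const
          intervalIntegral.intervalIntegrable_id, integral_pow, integral_id,
        intervalIntegral.integral_const]
      norm_num
    rw [this]
    ring
  refine ⟨hint, fun u hu0 hu1 => ?_⟩
  rw [hint, hfun u]
  have hne : Real.exp (-θ) * θ ^ 4 / (1 + θ) ^ 2 ≠ 0 := by
    positivity
  field_simp
  ring
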